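/- Let L be the union of a directed family 𝓕 of intermediate differential fields F with K ⊆ F ⊆ L, each F/K strongly normal, and let Gal_U(L/K) be the group of differential automorphisms of ⟨L, C_U⟩ over ⟨K, C_U⟩. Then the restriction maps make {Gal_U(F/K)}_{F ∈ 𝓕} into an inverse system, and since ⋂_{F∈𝓕} Gal_U(L/F) = {1}, the natural map Gal_U(L/K) → lim← Gal_U(F/K) is an injective group homomorphism. -/

import Mathlib

/-- Let `L` be the union of a directed family `𝓕 = (F i)` of intermediate
differential fields `K ⊆ F i ⊆ L`, each `F i/K` strongly normal (used through the
consequence that differential `K`-embeddings of `F i` into `U` map `F i` into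
`⟨F i, C_U⟩`).  Then restriction makes the groups `Gal_U(F i/K)` into an inverse system:
every `σ ∈ Gal_U(L/K)` maps the part of each `⟨F i, C_U⟩` into itself; and since
`⋂ᵢ Gal_U(L/F i) = {1}`, the natural map `Gal_U(L/K) → lim← Gal_U(F i/K)` is an injective
group homomorphism: an automorphism restricting to the identity on every `⟨F i, C_U⟩`
is the identity. -/
theorem stmt17 {U : Type*} [Field U] [CharZero U]
    (D : U → U)
    (hadd : ∀ a b : U, D (a + b) = D a + D b)
    (hleib : ∀ a b : U, D (a * b) = a * D b + D a * b)
    (K : Subfield U) (hKD : ∀ x ∈ K, D x ∈ K)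
    {ι : Type*} [Nonempty ι] (F : ι → Subfield U)
    (hdir : Directed (· ≤ ·) F)
    (hKF : ∀ i, K ≤ F i) (hFD : ∀ i, ∀ x ∈ F i, D x ∈ F i)
    (L : Subfield U) (hL : (L : Set U) = ⋃ i, (F i : Set U))
    (CU : Subfield U) (hCU : ∀ x : U, x ∈ CU ↔ D x = 0)
    (LC KC : Subfield U) (FC : ι → Subfield U)
    (hLC : LC = Subfield.closure ((L : Set U) ∪ (CU : Set U)))
    (hKC : KC = Subfield.closure ((K : Set U) ∪ (CU : Set U)))
    (hFC : ∀ i, FC i = Subfield.closure ((F i : Set U) ∪ (CU : Set U)))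
    -- each `F i/K` strongly normal, via the consequence used for well-definedness:
    (hSN : ∀ i, ∀ f : (↥(F i)) →+* U,
      (∀ x y : ↥(F i), D (x : U) = (y : U) → D (f x) = f y) →
      (∀ x : ↥(F i), (x : U) ∈ K → f x = (x : U)) →
      ∀ x : ↥(F i), f x ∈ FC i) :
    -- restriction maps are well defined (inverse system):
    (∀ σ : RingAut (↥LC),
      (∀ x y : ↥LC, D (x : U) = (y : U) → D (σ x : U) = (σ y : U)) →
      (∀ x : ↥LC, (x : U) ∈ KC → σ x = x) →
      ∀ i, ∀ x : ↥LC, (x : U) ∈ FC i → (σ x : U) ∈ FC i) ∧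
    -- injectivity of the natural map into the inverse limit:
    (∀ σ : RingAut (↥LC),
      (∀ x y : ↥LC, D (x : U) = (y : U) → D (σ x : U) = (σ y : U)) →
      (∀ x : ↥LC, (x : U) ∈ KC → σ x = x) →
      (∀ i, ∀ x : ↥LC, (x : U) ∈ FC i → σ x = x) → σ = 1) := by
  -- basic inclusions
  have hLsubLC : (L : Set U) ⊆ (LC : Set U) := by
    rw [hLC]; exact Set.Subset.trans Set.subset_union_left Subfield.subset_closure
  have hCUsubLC : (CU : Set U) ⊆ (LC : Set U) := by
    rw [hLC]; exact Set.Subset.trans Set.subset_union_right Subfield.subset_closure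
  have hFsubFC : ∀ i, (F i : Set U) ⊆ (FC i : Set U) := fun i => by
    rw [hFC]; exact Set.Subset.trans Set.subset_union_left Subfield.subset_closure
  have hCUsubFC : ∀ i, (CU : Set U) ⊆ (FC i : Set U) := fun i => by
    rw [hFC]; exact Set.Subset.trans Set.subset_union_right Subfield.subset_closure
  have hKsubKC : (K : Set U) ⊆ (KC : Set U) := by
    rw [hKC]; exact Set.Subset.trans Set.subset_union_left Subfield.subset_closure
  have hFsubL : ∀ i, (F i : Set U) ⊆ (L : Set U) := fun i => by
    rw [hL]; exact Set.subset_iUnion (fun i => (F i : Set U)) i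
  constructor
  · -- part 1
    intro σ hdiff hfix i x hx
    -- subfield of U of elements z ∈ LC with σ z ∈ FC i
    set T : Subfield U :=
      Subfield.map LC.subtype (Subfield.comap (LC.subtype.comp σ.toRingHom) (FC i)) with hT
    have hmem : ∀ z : U, z ∈ T ↔ ∃ h : z ∈ LC, (σ ⟨z, h⟩ : U) ∈ FC i := by
      intro z
      constructor
      · rintro ⟨⟨y, hy⟩, hy2, rfl⟩
        exact ⟨hy, hy2⟩
      · rintro ⟨h1, h2⟩
        exact ⟨⟨z, h1⟩, h2, rfl⟩
    -- FC i ≤ T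
    have hle : FC i ≤ T := by
      rw [hFC i]
      apply Subfield.closure_le.2
      rintro z (hz | hz)
      · -- z ∈ F i : use hSN with f the restriction of σ to F i
        have hzL : z ∈ LC := hLsubLC (hFsubL i hz)
        refine (hmem z).2 ⟨hzL, ?_⟩
        -- the embedding f : F i →+* U
        let f : (↥(F i)) →+* U :=
          (LC.subtype.comp σ.toRingHom).comp
            (Subfield.inclusion (fun w hw => hLsubLC (hFsubL i hw)))
        have hf1 : ∀ x y : ↥(F i), D (x : U) = (y : U) → D (f x) = f y := by
          intro a b hab
          exact hdiff _ _ hab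
        have hf2 : ∀ x : ↥(F i), (x : U) ∈ K → f x = (x : U) := by
          intro a ha
          have h := hfix (Subfield.inclusion (fun w hw => hLsubLC (hFsubL i hw)) a)
            (hKsubKC ha)
          show (σ _ : U) = (a : U)
          rw [h]; rfl
        have := hSN i f hf1 hf2 ⟨z, hz⟩
        exact this
      · -- z ∈ CU : σ maps CU to CU
        have hzL : z ∈ LC := hCUsubLC hz
        refine (hmem z).2 ⟨hzL, hCUsubFC i ?_⟩
        rw [SetLike.mem_coe, hCU]
        have hDz : D ((⟨z, hzL⟩ : ↥LC) : U) = ((0 : ↥LC) : U) := by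
          simpa using (hCU z).1 hz
        have := hdiff ⟨z, hzL⟩ 0 hDz
        simpa using this
    have := hle hx
    obtain ⟨h1, h2⟩ := (hmem (x : U)).1 this
    simpa using h2
  · -- part 2
    intro σ hdiff hfix hid
    have : ∀ z : ↥LC, σ z = z := by
      intro z
      -- fixed subfield mapped into U
      set T : Subfield U :=
        Subfield.map LC.subtype
          ((LC.subtype.comp σ.toRingHom).eqLocusField LC.subtype) with hT
      have hmem : ∀ w : U, w ∈ T → ∃ h : w ∈ LC, σ ⟨w, h⟩ = ⟨w, h⟩ := by
        rintro w ⟨⟨y, hy⟩, hy2, rfl⟩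
        refine ⟨hy, ?_⟩
        have : (σ ⟨y, hy⟩ : U) = y := hy2
        exact Subtype.ext this
      have hle : LC ≤ T := by
        rw [hLC]
        apply Subfield.closure_le.2
        rintro w (hw | hw)
        · rw [hL] at hw
          obtain ⟨_, ⟨i, rfl⟩, hwi⟩ := hw
          have hwL : w ∈ LC := hLsubLC ((hFsubL i) hwi)
          refine ⟨⟨w, hwL⟩, ?_, rfl⟩
          have := hid i ⟨w, hwL⟩ (hFsubFC i hwi)
          exact congrArg Subtype.val this
        · obtain ⟨i⟩ := ‹Nonempty ι›
          have hwL : w ∈ LC := hCUsubLC hw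
          refine ⟨⟨w, hwL⟩, ?_, rfl⟩
          have := hid i ⟨w, hwL⟩ (hCUsubFC i hw)
          exact congrArg Subtype.val this
      obtain ⟨h1, h2⟩ := hmem (z : U) (hle z.2)
      simpa using h2
    exact RingEquiv.ext fun z => by simpa using this z
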